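/- arXiv:2410.16401 — 2 statements merged into one kernel-verified Lean document; each statement's English description precedes it below -/
import Mathlib

section
/- Assume each x_i has unit norm, ‖x_i‖ = 1. If θ ∈ ℝ^{md} satisfies L(θ) = 0 (equivalently f_i(θ) = y_i for all i), then the trace of the Hessian of L at θ equals 2 Σ_{i=1}^n Σ_{j=1}^m φ'(θ_j · x_i)², i.e., Tr D²L(θ) = 2 G(θ). -/
open scoped RealInnerProductSpace
open Real Filter

noncomputable section

/-- The parameter space ℝ^{md}: m blocks θ_j ∈ ℝ^d, with the Euclidean norm. -/
abbrev Param (m d : ℕ) : Type := PiLp 2 (fun _ : Fin m => EuclideanSpace ℝ (Fin d))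

/-- Network output f_i(θ) = Σ_j φ(θ_j · x_i). -/
def netF {n m d : ℕ} (φ : ℝ → ℝ) (x : Fin n → EuclideanSpace ℝ (Fin d)) (i : Fin n)
    (θ : Param m d) : ℝ := ∑ j, φ ⟪θ j, x i⟫

/-- Euclidean gradient Df_i(θ), with j-th block φ'(θ_j · x_i) x_i. -/
def gradF {n m d : ℕ} (φ : ℝ → ℝ) (x : Fin n → EuclideanSpace ℝ (Fin d)) (i : Fin n)
    (θ : Param m d) : Param m d := WithLp.toLp 2 (fun j => (deriv φ ⟪θ j, x i⟫) • x i)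

/-- Implicit regularizer G(θ) = Σ_i Σ_j φ'(θ_j · x_i)². -/
def regG {n m d : ℕ} (φ : ℝ → ℝ) (x : Fin n → EuclideanSpace ℝ (Fin d))
    (θ : Param m d) : ℝ := ∑ i, ∑ j, (deriv φ ⟪θ j, x i⟫) ^ 2

/-- Euclidean gradient DG(θ), with j-th block Σ_i 2 φ'(θ_j·x_i) φ''(θ_j·x_i) x_i. -/
def gradRegG {n m d : ℕ} (φ : ℝ → ℝ) (x : Fin n → EuclideanSpace ℝ (Fin d))
    (θ : Param m d) : Param m d :=
  WithLp.toLp 2 (fun j => ∑ i, (2 * deriv φ ⟪θ j, x i⟫ * deriv (deriv φ) ⟪θ j, x i⟫) • x i)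

/-- Squared loss L(θ) = Σ_i (f_i(θ) − y_i)². -/
def lossL {n m d : ℕ} (φ : ℝ → ℝ) (x : Fin n → EuclideanSpace ℝ (Fin d)) (y : Fin n → ℝ)
    (θ : Param m d) : ℝ := ∑ i, (netF φ x i θ - y i) ^ 2

/-- Jacobian Df(θ) : ℝ^{md} → ℝ^n, whose i-th row is Df_i(θ). -/
def jacobian {n m d : ℕ} (φ : ℝ → ℝ) (x : Fin n → EuclideanSpace ℝ (Fin d))
    (θ : Param m d) : Param m d →ₗ[ℝ] (Fin n → ℝ) :=
  LinearMap.pi fun i => (innerSL ℝ (gradF φ x i θ)).toLinearMap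

/-- Riemannian gradient ∇G(θ): orthogonal projection of DG(θ) onto ker Df(θ). -/
def rgradG {n m d : ℕ} (φ : ℝ → ℝ) (x : Fin n → EuclideanSpace ℝ (Fin d))
    (θ : Param m d) : Param m d :=
  ((LinearMap.ker (jacobian φ x θ)).orthogonalProjectionOnto (gradRegG φ x θ) : Param m d)
instance instCSParam (m d : ℕ) : ContinuousSMul ℝ (Param m d) := inferInstance

/-- linear functional v ↦ ⟪v j, x⟫ -/
def Pji {m d : ℕ} (x : EuclideanSpace ℝ (Fin d)) (j : Fin m) : Param m d →L[ℝ] ℝ :=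
  (innerSL ℝ x).comp (PiLp.proj 2 _ j)

lemma Pji_apply {m d : ℕ} (x : EuclideanSpace ℝ (Fin d)) (j : Fin m) (v : Param m d) :
    Pji x j v = ⟪v j, x⟫ := real_inner_comm (v j) x

lemma hasFDerivAt_inner_comp {m d : ℕ} (x : EuclideanSpace ℝ (Fin d)) (j : Fin m)
    (θ' : Param m d) :
    HasFDerivAt (fun v : Param m d => ⟪v j, x⟫) (Pji x j) θ' := by
  have h : (fun v : Param m d => ⟪v j, x⟫) = Pji x j := funext fun v => (Pji_apply x j v).symm
  rw [h]; exact (Pji x j).hasFDerivAt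

def DnetF {n m d : ℕ} (φ : ℝ → ℝ) (x : Fin n → EuclideanSpace ℝ (Fin d)) (i : Fin n)
    (θ' : Param m d) : Param m d →L[ℝ] ℝ :=
  ∑ j, (deriv φ ⟪θ' j, x i⟫) • Pji (x i) j

lemma hasFDerivAt_netF {n m d : ℕ} (φ : ℝ → ℝ) (hφ : Differentiable ℝ φ)
    (x : Fin n → EuclideanSpace ℝ (Fin d)) (i : Fin n) (θ' : Param m d) :
    HasFDerivAt (netF φ x i) (DnetF φ x i θ') θ' := by
  unfold netF DnetF
  exact HasFDerivAt.fun_sum fun j _ =>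
    ((hφ ⟪θ' j, x i⟫).hasDerivAt).comp_hasFDerivAt θ' (hasFDerivAt_inner_comp (x i) j θ')

def DlossL {n m d : ℕ} (φ : ℝ → ℝ) (x : Fin n → EuclideanSpace ℝ (Fin d)) (y : Fin n → ℝ)
    (θ' : Param m d) : Param m d →L[ℝ] ℝ :=
  ∑ i, (2 * (netF φ x i θ' - y i)) • DnetF φ x i θ'

lemma hasFDerivAt_lossL {n m d : ℕ} (φ : ℝ → ℝ) (hφ : Differentiable ℝ φ)
    (x : Fin n → EuclideanSpace ℝ (Fin d)) (y : Fin n → ℝ) (θ' : Param m d) :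
    HasFDerivAt (lossL φ x y) (DlossL φ x y θ') θ' := by
  unfold lossL DlossL
  refine HasFDerivAt.fun_sum fun i _ => ?_
  have hsub := (hasFDerivAt_netF φ hφ x i θ').sub_const (y i)
  have h := hsub.mul hsub
  simp only [← pow_two] at h
  rw [two_mul, add_smul]
  exact h


/-- at any zero-loss point, Tr D²L(θ) = 2 G(θ) = 2 Σ_i Σ_j φ'(θ_j·x_i)². -/
theorem stmt_4
    (n m d : ℕ) (hn : 1 ≤ n) (hm : 1 ≤ m) (hd : 1 ≤ d)
    (x : Fin n → EuclideanSpace ℝ (Fin d)) (hx : ∀ i, ‖x i‖ = 1)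
    (y : Fin n → ℝ)
    (φ : ℝ → ℝ) (hφ : ContDiff ℝ (⊤ : ℕ∞) φ)
    (θ : Param m d)
    (hfit : ∀ i, netF φ x i θ = y i) :
    ∑ j : Fin m, ∑ k : Fin d,
        iteratedFDeriv ℝ 2 (lossL φ x y) θ
          ![(WithLp.toLp 2 (Pi.single j (EuclideanSpace.single k (1 : ℝ))) : Param m d),
            (WithLp.toLp 2 (Pi.single j (EuclideanSpace.single k (1 : ℝ))) : Param m d)]
      = 2 * regG φ x θ := by
  classical
  have hφ' : ContDiff ℝ (⊤ : ℕ∞) (deriv φ) := (contDiff_infty_iff_deriv.mp hφ).2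
  have hd1 : Differentiable ℝ φ := hφ.differentiable (by simp)
  have hd2 : Differentiable ℝ (deriv φ) := hφ'.differentiable (by simp)
  have hinnerCD : ∀ (j : Fin m) (i : Fin n),
      ContDiff ℝ (⊤ : ℕ∞) (fun v : Param m d => (⟪v j, x i⟫ : ℝ)) := by
    intro j i
    have h : (fun v : Param m d => (⟪v j, x i⟫ : ℝ)) = Pji (x i) j :=
      funext fun v => (Pji_apply (x i) j v).symm
    rw [h]; exact (Pji (x i) j).contDiff
  have hLcd : ContDiff ℝ (⊤ : ℕ∞) (lossL (m := m) φ x y) := by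
    unfold lossL netF
    exact ContDiff.sum fun i _ =>
      ((ContDiff.sum fun j _ => hφ.comp (hinnerCD j i)).sub contDiff_const).pow 2
  have hfd : fderiv ℝ (lossL (m := m) φ x y) = DlossL φ x y :=
    funext fun θ' => (hasFDerivAt_lossL φ hd1 x y θ').fderiv
  have hdfA : DifferentiableAt ℝ (fderiv ℝ (lossL φ x y)) θ := by
    have h2 : ContDiff ℝ (⊤ : ℕ∞) (fderiv ℝ (lossL φ x y)) :=
      hLcd.fderiv_right (by exact_mod_cast le_top)
    exact (h2.differentiable (by simp)) θ
  have key : ∀ v : Param m d,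
      iteratedFDeriv ℝ 2 (lossL φ x y) θ ![v, v]
        = ∑ i, 2 * (DnetF φ x i θ v) ^ 2 := by
    intro v
    rw [iteratedFDeriv_two_apply]
    simp only [Matrix.cons_val_zero, Matrix.cons_val_one, Matrix.head_cons]
    set B' := fderiv ℝ (fderiv ℝ (lossL φ x y)) θ with hB'def
    have h1 : HasFDerivAt (fun θ' => fderiv ℝ (lossL φ x y) θ' v)
        ((ContinuousLinearMap.apply ℝ ℝ v).comp B') θ :=
      (ContinuousLinearMap.apply ℝ ℝ v).hasFDerivAt.comp θ hdfA.hasFDerivAt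
    set W : Fin n → (Param m d →L[ℝ] ℝ) := fun i =>
      ∑ j, (Pji (x i) j v) • ((deriv (deriv φ) ⟪θ j, x i⟫) • Pji (x i) j) with hW
    have hgeq : (fun θ' => fderiv ℝ (lossL φ x y) θ' v)
        = fun θ' => ∑ i, (2 * (netF φ x i θ' - y i)) * (DnetF φ x i θ' v) := by
      funext θ'
      rw [hfd]
      simp [DlossL]
    have h2 : HasFDerivAt (fun θ' => fderiv ℝ (lossL φ x y) θ' v)
        (∑ i, ((2 * (netF φ x i θ - y i)) • W i
            + (DnetF φ x i θ v) • ((2:ℝ) • DnetF φ x i θ))) θ := by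
      rw [hgeq]
      refine HasFDerivAt.fun_sum fun i _ => ?_
      have hu : HasFDerivAt (fun θ' => 2 * (netF φ x i θ' - y i))
          ((2:ℝ) • DnetF φ x i θ) θ :=
        ((hasFDerivAt_netF φ hd1 x i θ).sub_const (y i)).const_mul 2
      have hw : HasFDerivAt (fun θ' => DnetF φ x i θ' v) (W i) θ := by
        have heq : (fun θ' : Param m d => DnetF φ x i θ' v)
            = fun θ' => ∑ j, deriv φ ⟪θ' j, x i⟫ * (Pji (x i) j v) := by
          funext θ'; simp [DnetF]
        rw [heq, hW]
        refine HasFDerivAt.fun_sum fun j _ => ?_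
        have hder : HasFDerivAt (fun θ' : Param m d => deriv φ ⟪θ' j, x i⟫)
            ((deriv (deriv φ) ⟪θ j, x i⟫) • Pji (x i) j) θ :=
          by have h := ((hd2 ⟪θ j, x i⟫).hasDerivAt).comp_hasFDerivAt θ (hasFDerivAt_inner_comp (x i) j θ); exact h
        have := hder.mul_const (Pji (x i) j v)
        exact this
      exact hu.mul hw
    have huniq := h1.unique h2
    have : ((ContinuousLinearMap.apply ℝ ℝ v).comp B') v
        = (∑ i, ((2 * (netF φ x i θ - y i)) • W i
            + (DnetF φ x i θ v) • ((2:ℝ) • DnetF φ x i θ))) v := by rw [huniq]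
    simp only [ContinuousLinearMap.comp_apply, ContinuousLinearMap.apply_apply] at this
    rw [this]
    simp only [ContinuousLinearMap.sum_apply, ContinuousLinearMap.add_apply,
      ContinuousLinearMap.smul_apply, smul_eq_mul]
    refine Finset.sum_congr rfl fun i _ => ?_
    rw [hfit i]
    ring
  rw [Finset.sum_congr rfl fun j _ => Finset.sum_congr rfl fun k _ => key _]
  have hDv : ∀ (i : Fin n) (j : Fin m) (k : Fin d),
      DnetF φ x i θ (WithLp.toLp 2 (Pi.single j (EuclideanSpace.single k (1 : ℝ))))
        = deriv φ ⟪θ j, x i⟫ * x i k := by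
    intro i j k
    have : ∀ j' : Fin m,
        Pji (x i) j' (WithLp.toLp 2 (Pi.single j (EuclideanSpace.single k (1 : ℝ))) : Param m d)
          = if j' = j then x i k else 0 := by
      intro j'
      rw [Pji_apply]
      by_cases h : j' = j
      · subst h
        simp [Pi.single_apply, EuclideanSpace.inner_single_left]
      · simp [Pi.single_apply, h]
    simp only [DnetF, ContinuousLinearMap.sum_apply, ContinuousLinearMap.smul_apply,
      smul_eq_mul, this, mul_ite, mul_zero]
    simp
  have hnormsq : ∀ i, ∑ k, (x i k) ^ 2 = 1 := by
    intro i
    have h : (⟪x i, x i⟫ : ℝ) = 1 := by rw [real_inner_self_eq_norm_sq, hx i]; norm_num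
    rw [PiLp.inner_apply] at h
    simpa [sq] using h
  calc ∑ j : Fin m, ∑ k : Fin d, ∑ i,
        2 * (DnetF φ x i θ (WithLp.toLp 2 (Pi.single j (EuclideanSpace.single k (1 : ℝ))))) ^ 2
      = ∑ j : Fin m, ∑ i, ∑ k : Fin d,
          2 * (deriv φ ⟪θ j, x i⟫) ^ 2 * (x i k) ^ 2 := by
        refine Finset.sum_congr rfl fun j _ => ?_
        rw [Finset.sum_comm]
        refine Finset.sum_congr rfl fun i _ => Finset.sum_congr rfl fun k _ => ?_
        rw [hDv]
        ring
    _ = ∑ j : Fin m, ∑ i, 2 * (deriv φ ⟪θ j, x i⟫) ^ 2 := by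
        refine Finset.sum_congr rfl fun j _ => Finset.sum_congr rfl fun i _ => ?_
        rw [← Finset.mul_sum, hnormsq i, mul_one]
    _ = 2 * regG φ x θ := by
        rw [regG, Finset.sum_comm, Finset.mul_sum]
        exact Finset.sum_congr rfl fun j _ => by rw [Finset.mul_sum]
end
end

section
/- Assume the coherence assumption with constant μ > 0 and φ'(z) ≥ ρ1 > 0 for all z ∈ ℝ, and set C = 4 m μ ρ1². Let θ̄ : [0, ∞) → ℝ^{md} be differentiable with θ̄'(t) = −DL(θ̄(t)) for all t ≥ 0 (the Euclidean gradient flow of the loss). Then for all t ≥ 0: L(θ̄(t)) ≤ e^{−C t} · L(θ̄(0)). -/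
open scoped RealInnerProductSpace
open Real Filter

noncomputable section

instance instContinuousSMulParam (m d : ℕ) : ContinuousSMul ℝ (Param m d) :=
  IsBoundedSMul.continuousSMul

/-- Auxiliary: Fréchet derivative of netF. -/
lemma aux_hasFDerivAt_netF {n m d : ℕ} (φ : ℝ → ℝ) (hφ : ContDiff ℝ (⊤ : ℕ∞) φ)
    (x : Fin n → EuclideanSpace ℝ (Fin d)) (i : Fin n) (θ : Param m d) :
    HasFDerivAt (netF φ x i) (innerSL ℝ (gradF φ x i θ)) θ := by
  have key : ∀ j : Fin m, HasFDerivAt (fun θ : Param m d => φ ⟪θ j, x i⟫)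
      ((deriv φ ⟪θ j, x i⟫) • ((innerSL ℝ (x i)).comp (PiLp.proj (𝕜 := ℝ) 2 _ j))) θ := by
    intro j
    have hlin : HasFDerivAt (fun θ : Param m d => ⟪θ j, x i⟫)
        ((innerSL ℝ (x i)).comp (PiLp.proj (𝕜 := ℝ) 2 _ j)) θ := by
      have h0 := ((innerSL ℝ (x i)).comp (PiLp.proj (𝕜 := ℝ) 2
        (fun _ : Fin m => EuclideanSpace ℝ (Fin d)) j)).hasFDerivAt (x := θ)
      have heq : (fun θ' : Param m d => ⟪θ' j, x i⟫) = (fun θ' : Param m d =>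
          ((innerSL ℝ (x i)).comp (PiLp.proj (𝕜 := ℝ) 2 _ j)) θ') := by
        funext θ'
        exact (real_inner_comm (θ' j) (x i)).symm
      rw [heq]; exact h0
    have hd : HasDerivAt φ (deriv φ ⟪θ j, x i⟫) ⟪θ j, x i⟫ :=
      ((hφ.differentiable (by simp)) _).hasDerivAt
    exact hd.comp_hasFDerivAt θ hlin
  have hsum := HasFDerivAt.fun_sum (fun j (_ : j ∈ Finset.univ) => key j)
  refine hsum.congr_fderiv (Eq.symm ?_)
  ext v
  simp [gradF, PiLp.inner_apply, real_inner_smul_left, real_inner_comm, Finset.mul_sum, mul_assoc]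
  exact Finset.sum_congr rfl fun _ _ => Finset.sum_congr rfl fun _ _ => by ring

/-- Auxiliary: the Euclidean gradient of the loss. -/
def auxGradL {n m d : ℕ} (φ : ℝ → ℝ) (x : Fin n → EuclideanSpace ℝ (Fin d)) (y : Fin n → ℝ)
    (θ : Param m d) : Param m d :=
  WithLp.toLp 2 (fun j => ∑ i, (2 * (netF φ x i θ - y i) * deriv φ ⟪θ j, x i⟫) • x i)

lemma aux_hasGradientAt_lossL {n m d : ℕ} (φ : ℝ → ℝ) (hφ : ContDiff ℝ (⊤ : ℕ∞) φ)
    (x : Fin n → EuclideanSpace ℝ (Fin d)) (y : Fin n → ℝ) (θ : Param m d) :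
    HasGradientAt (lossL φ x y) (auxGradL φ x y θ) θ := by
  rw [hasGradientAt_iff_hasFDerivAt]
  have key : ∀ i : Fin n, HasFDerivAt (fun θ : Param m d => (netF φ x i θ - y i) ^ 2)
      ((2 * (netF φ x i θ - y i)) • innerSL ℝ (gradF φ x i θ)) θ := by
    intro i
    have hsq : HasDerivAt (fun s : ℝ => (s - y i) ^ 2) (2 * (netF φ x i θ - y i))
        (netF φ x i θ) := by
      have := ((hasDerivAt_id (netF φ x i θ)).sub_const (y i)).fun_pow 2
      simpa using this
    exact hsq.comp_hasFDerivAt θ (aux_hasFDerivAt_netF φ hφ x i θ)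
  have hsum := HasFDerivAt.fun_sum (fun i (_ : i ∈ Finset.univ) => key i)
  refine hsum.congr_fderiv (Eq.symm ?_)
  ext v
  simp only [InnerProductSpace.toDual_apply_apply, ContinuousLinearMap.coe_sum', Finset.sum_apply,
    ContinuousLinearMap.coe_smul', Pi.smul_apply, innerSL_apply_apply, smul_eq_mul]
  rw [PiLp.inner_apply]
  simp only [auxGradL, gradF, sum_inner, real_inner_smul_left, PiLp.inner_apply]
  rw [Finset.sum_comm]
  refine Finset.sum_congr rfl fun i _ => ?_
  simp [Finset.mul_sum, mul_assoc]
  exact Finset.sum_congr rfl fun _ _ => Finset.sum_congr rfl fun _ _ => by ring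

lemma aux_gradL_sq_lower {n m d : ℕ} (φ : ℝ → ℝ)
    (x : Fin n → EuclideanSpace ℝ (Fin d)) (y : Fin n → ℝ)
    (μ : ℝ) (hμ : 0 < μ)
    (hcoh : ∀ c : Fin n → ℝ, μ * ∑ i, (c i) ^ 2 ≤ ‖∑ i, c i • x i‖ ^ 2)
    (ρ1 : ℝ) (hρ1 : 0 < ρ1) (hφ' : ∀ z, ρ1 ≤ deriv φ z) (θ : Param m d) :
    4 * (m : ℝ) * μ * ρ1 ^ 2 * lossL φ x y θ ≤ ‖auxGradL φ x y θ‖ ^ 2 := by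
  rw [PiLp.norm_sq_eq_of_L2]
  have hblock : ∀ j : Fin m, 4 * μ * ρ1 ^ 2 * lossL φ x y θ ≤ ‖auxGradL φ x y θ j‖ ^ 2 := by
    intro j
    have h1 := hcoh (fun i => 2 * (netF φ x i θ - y i) * deriv φ ⟪θ j, x i⟫)
    have h2 : 4 * μ * ρ1 ^ 2 * lossL φ x y θ ≤
        μ * ∑ i, (2 * (netF φ x i θ - y i) * deriv φ ⟪θ j, x i⟫) ^ 2 := by
      rw [lossL, Finset.mul_sum, Finset.mul_sum]
      refine Finset.sum_le_sum fun i _ => ?_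
      have hd := hφ' ⟪θ j, x i⟫
      nlinarith [mul_nonneg (mul_nonneg hμ.le (sq_nonneg (netF φ x i θ - y i)))
        (mul_nonneg (sub_nonneg.2 hd) (by linarith : (0:ℝ) ≤ deriv φ ⟪θ j, x i⟫ + ρ1))]
    exact h2.trans (h1.trans_eq (by rw [auxGradL]))
  calc 4 * (m : ℝ) * μ * ρ1 ^ 2 * lossL φ x y θ
      = ∑ _j : Fin m, 4 * μ * ρ1 ^ 2 * lossL φ x y θ := by
        simp [Finset.sum_const]; ring
    _ ≤ ∑ j, ‖auxGradL φ x y θ j‖ ^ 2 := Finset.sum_le_sum fun j _ => hblock j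

/-- along the Euclidean gradient flow of the loss,
L(θ̄(t)) ≤ e^{−Ct} L(θ̄(0)) with C = 4 m μ ρ1². -/
theorem stmt_10
    (n m d : ℕ) (hn : 1 ≤ n) (hm : 1 ≤ m) (hd : 1 ≤ d)
    (x : Fin n → EuclideanSpace ℝ (Fin d)) (hx : ∀ i, ‖x i‖ = 1)
    (μ : ℝ) (hμ : 0 < μ)
    (hcoh : ∀ c : Fin n → ℝ, μ * ∑ i, (c i) ^ 2 ≤ ‖∑ i, c i • x i‖ ^ 2)
    (y : Fin n → ℝ)
    (φ : ℝ → ℝ) (hφ : ContDiff ℝ (⊤ : ℕ∞) φ)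
    (ρ1 : ℝ) (hρ1 : 0 < ρ1)
    (hφ' : ∀ z, ρ1 ≤ deriv φ z)
    (C : ℝ) (hC : C = 4 * (m : ℝ) * μ * ρ1 ^ 2)
    (θb : ℝ → Param m d)
    (hflow : ∀ t, 0 ≤ t → HasDerivAt θb (-(gradient (lossL φ x y) (θb t))) t) :
    ∀ t, 0 ≤ t → lossL φ x y (θb t) ≤ Real.exp (-(C * t)) * lossL φ x y (θb 0) := by
  intro t ht
  set L : ℝ → ℝ := fun s => lossL φ x y (θb s) with hLdef
  have hLd : ∀ s, 0 ≤ s → HasDerivAt L (-‖auxGradL φ x y (θb s)‖ ^ 2) s := by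
    intro s hs
    have hG := aux_hasGradientAt_lossL φ hφ x y (θb s)
    have hgrad : gradient (lossL φ x y) (θb s) = auxGradL φ x y (θb s) := hG.gradient
    have hF := hG.hasFDerivAt
    have hcomp := hF.comp_hasDerivAt s (hgrad ▸ hflow s hs)
    refine hcomp.congr_deriv (Eq.symm ?_)
    rw [InnerProductSpace.toDual_apply_apply, inner_neg_right, real_inner_self_eq_norm_sq]
  have hLnn : ∀ s, 0 ≤ L s := fun s => Finset.sum_nonneg fun i _ => sq_nonneg _
  set g : ℝ → ℝ := fun s => Real.exp (C * s) * L s with hgdef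
  have hgd : ∀ s, 0 ≤ s → HasDerivAt g
      ((Real.exp (C * s) * C) * L s + Real.exp (C * s) * (-‖auxGradL φ x y (θb s)‖ ^ 2)) s := by
    intro s hs
    have he : HasDerivAt (fun s => Real.exp (C * s)) (Real.exp (C * s) * C) s :=
      (Real.hasDerivAt_exp (C * s)).comp s (by simpa using (hasDerivAt_id s).const_mul C)
    exact he.mul (hLd s hs)
  have hanti : AntitoneOn g (Set.Ici (0 : ℝ)) := by
    apply antitoneOn_of_deriv_nonpos (convex_Ici 0)
    · exact fun s hs => ((hgd s hs).continuousAt).continuousWithinAt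
    · intro s hs
      rw [interior_Ici] at hs
      exact ((hgd s hs.le).differentiableAt).differentiableWithinAt
    · intro s hs
      rw [interior_Ici] at hs
      rw [(hgd s hs.le).deriv]
      have hb := aux_gradL_sq_lower φ x y μ hμ hcoh ρ1 hρ1 hφ' (θb s)
      rw [← hC] at hb
      have hepos := Real.exp_pos (C * s)
      nlinarith [mul_le_mul_of_nonneg_left hb hepos.le]
  have h0 : g t ≤ g 0 := hanti Set.self_mem_Ici ht ht
  have hkey : Real.exp (C * t) * L t ≤ L 0 := by simpa [hgdef] using h0
  calc L t = Real.exp (-(C * t)) * (Real.exp (C * t) * L t) := by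
        rw [← mul_assoc, ← Real.exp_add]; simp
    _ ≤ Real.exp (-(C * t)) * L 0 :=
        mul_le_mul_of_nonneg_left hkey (Real.exp_nonneg _)
end
end
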